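/- With the quasi-norm q_β(x) = sup_{(l₁,l₂)∈Y_d} (β_{l₁l₂}|x_{l₁l₂}|)^{1/(l₁+l₂)} on G₀^#, where β_{l₁l₂} = 2^{⌊δw⌋} for l₂ ≠ 0 and β_{l₁0} = 2^{⌊δ'w⌋}, and the subgroup H_Q = {h ∈ ℤ^{Y_d} : Q | h_{l₁l₂} for all (l₁,l₂)}, the discrete ball B_{β,H_Q}(x,r) = {y ∈ H_Q : q_β(x·y^{-1}) < r} satisfies, for any x ∈ G₀^# and any r ≥ 2Q·2^{δ'w}, the cardinality bound |B_{β,H_Q}(x,r)| ≃ ∏_{(l₁,l₂)∈Y_d} r^{l₁+l₂}/(Q β_{l₁l₂}), with implied constants depending only on d. -/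

import Mathlib

open scoped BigOperators

/-- The index set `Y_d = {(l₁, l₂) : 0 ≤ l₂ < l₁ ≤ d}`. -/
abbrev Yd (d : ℕ) := {p : Fin (d + 1) × Fin (d + 1) // (p.2 : ℕ) < (p.1 : ℕ)}

/-- The index `(l₁, 0)` associated to `p = (l₁, l₂) ∈ Y_d`. -/
def idxA {d : ℕ} (p : Yd d) : Yd d :=
  ⟨(p.val.1, 0), by simpa using Nat.lt_of_le_of_lt (Nat.zero_le (p.val.2 : ℕ)) p.property⟩

/-- The index `(l₂, 0)` associated to `p = (l₁, l₂) ∈ Y_d` with `l₂ ≥ 1`. -/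
def idxB {d : ℕ} (p : Yd d) (h : (p.val.2 : ℕ) ≠ 0) : Yd d :=
  ⟨(p.val.2, 0), by simpa using Nat.pos_of_ne_zero h⟩

/-- The step-two group multiplication on `G₀^# = R^{Y_d}`:
`[x·y]_{l₁0} = x_{l₁0} + y_{l₁0}` and
`[x·y]_{l₁l₂} = x_{l₁l₂} + y_{l₁l₂} + x_{l₁0} y_{l₂0}` for `l₂ ≥ 1`. -/
def Gmul {R : Type*} [CommRing R] {d : ℕ} (x y : Yd d → R) : Yd d → R := fun p =>
  if h : (p.val.2 : ℕ) = 0 then x p + y p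
  else x p + y p + x (idxA p) * y (idxB p h)

/-- The inverse in `G₀^#`: `g⁻¹ = (-g^{(1)}, -g^{(2)} + R₀(g^{(1)}, g^{(1)}))`. -/
def Ginv {R : Type*} [CommRing R] {d : ℕ} (x : Yd d → R) : Yd d → R := fun p =>
  if h : (p.val.2 : ℕ) = 0 then -x p
  else -x p + x (idxA p) * x (idxB p h)

/-- The quasi-norm `q_β(x) = sup_{(l₁,l₂) ∈ Y_d} (β_{l₁l₂} |x_{l₁l₂}|)^{1/(l₁+l₂)}`. -/
noncomputable def qnorm {d : ℕ} (β : Yd d → ℝ) (x : Yd d → ℝ) : ℝ :=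
  ⨆ p : Yd d, (β p * |x p|) ^ ((1 : ℝ) / (((p.val.1 : ℕ) : ℝ) + ((p.val.2 : ℕ) : ℝ)))

/-- Multiples of `Q` in the open interval `(a - M, a + M)`. -/
noncomputable def Tset (Q : ℕ) (a M : ℝ) : Finset ℤ :=
  (Finset.Ioo ⌊(a - M) / (Q : ℝ)⌋ ⌈(a + M) / (Q : ℝ)⌉).image (fun j => (Q : ℤ) * j)

lemma mem_Tset {Q : ℕ} (hQ : 0 < Q) {a M : ℝ} {k : ℤ} :
    k ∈ Tset Q a M ↔ ((Q : ℤ) ∣ k ∧ |a - (k : ℝ)| < M) := by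
  have hQ0 : (0:ℝ) < (Q:ℝ) := by exact_mod_cast hQ
  simp only [Tset, Finset.mem_image, Finset.mem_Ioo]
  constructor
  · rintro ⟨j, ⟨hj1, hj2⟩, rfl⟩
    rw [Int.floor_lt, div_lt_iff₀ hQ0] at hj1
    rw [Int.lt_ceil, lt_div_iff₀ hQ0] at hj2
    refine ⟨Dvd.intro _ rfl, ?_⟩
    rw [abs_sub_lt_iff]
    push_cast
    constructor <;> nlinarith
  · rintro ⟨⟨j, rfl⟩, h⟩
    rw [abs_sub_lt_iff] at h
    push_cast at h
    refine ⟨j, ⟨?_, ?_⟩, rfl⟩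
    · rw [Int.floor_lt, div_lt_iff₀ hQ0]; nlinarith [h.2]
    · rw [Int.lt_ceil, lt_div_iff₀ hQ0]; nlinarith [h.1]

lemma Tset_card_bounds {Q : ℕ} (hQ : 0 < Q) {a M : ℝ} (hM : 2 * Q ≤ M) :
    M / Q ≤ ((Tset Q a M).card : ℝ) ∧ ((Tset Q a M).card : ℝ) ≤ 3 * (M / Q) := by
  have hQ0 : (0:ℝ) < (Q:ℝ) := by exact_mod_cast hQ
  have hMQ : (2:ℝ) ≤ M / Q := (le_div_iff₀ hQ0).mpr (by linarith)
  set u := (a - M) / (Q:ℝ) with hu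
  set v := (a + M) / (Q:ℝ) with hv
  have hvu : v - u = 2 * (M / Q) := by rw [hu, hv]; field_simp; ring
  have h1 : v ≤ (⌈v⌉:ℝ) := Int.le_ceil v
  have h2 : (⌈v⌉:ℝ) < v + 1 := Int.ceil_lt_add_one v
  have h3 : (⌊u⌋:ℝ) ≤ u := Int.floor_le u
  have h4 : u - 1 < (⌊u⌋:ℝ) := Int.sub_one_lt_floor u
  have hlt : ⌊u⌋ < ⌈v⌉ := by
    have : (⌊u⌋:ℝ) < (⌈v⌉:ℝ) := by linarith
    exact_mod_cast this
  have hcard : ((Tset Q a M).card : ℝ) = (⌈v⌉:ℝ) - (⌊u⌋:ℝ) - 1 := by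
    have hinj : (Tset Q a M).card = (Finset.Ioo ⌊u⌋ ⌈v⌉).card :=
      Finset.card_image_of_injective _ (mul_right_injective₀ (by exact_mod_cast hQ.ne'))
    have h := Int.card_Ioo_of_lt _ _ hlt
    rw [hinj]
    exact_mod_cast h
  constructor <;> rw [hcard] <;> linarith

lemma fin_ciSup_lt_iff {ι : Type*} [Finite ι] [Nonempty ι] (f : ι → ℝ) (r : ℝ) :
    (⨆ i, f i) < r ↔ ∀ i, f i < r := by
  obtain ⟨i₀, hi₀⟩ := Finite.exists_max f
  exact ⟨fun h i => lt_of_le_of_lt (le_ciSup (Set.finite_range f).bddAbove i) h,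
    fun h => lt_of_le_of_lt (ciSup_le hi₀) (h i₀)⟩

/-- The exponent `l₁ + l₂`. -/
def npE {d : ℕ} (p : Yd d) : ℕ := (p.val.1 : ℕ) + (p.val.2 : ℕ)

/-- The "center" of the interval constraining `y p`. -/
noncomputable def ctrF {d : ℕ} (x : Yd d → ℝ) (y : Yd d → ℤ) (p : Yd d) : ℝ :=
  if h : (p.val.2 : ℕ) = 0 then x p
  else x p + ((y (idxA p) : ℝ) - x (idxA p)) * (y (idxB p h) : ℝ)

lemma idxA_snd {d : ℕ} (p : Yd d) : ((idxA p).val.2 : ℕ) = 0 := rfl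

lemma idxB_snd {d : ℕ} (p : Yd d) (h : (p.val.2 : ℕ) ≠ 0) : ((idxB p h).val.2 : ℕ) = 0 := rfl

lemma Gmul_Ginv_eval {d : ℕ} (x : Yd d → ℝ) (y : Yd d → ℤ) (p : Yd d) :
    Gmul x (Ginv (fun q => ((y q : ℤ) : ℝ))) p = ctrF x y p - (y p : ℝ) := by
  by_cases h : (p.val.2 : ℕ) = 0
  · simp [Gmul, Ginv, ctrF, h]
    ring
  · simp [Gmul, Ginv, ctrF, h, idxA_snd, idxB_snd]
    ring

lemma qnorm_lt_iff {d : ℕ} (hd : 1 ≤ d) (β z : Yd d → ℝ) (hβ : ∀ p, 0 < β p) {r : ℝ}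
    (hr : 0 < r) : qnorm β z < r ↔ ∀ p, |z p| < r ^ (npE p) / β p := by
  have : Nonempty (Yd d) := ⟨⟨(⟨1, by omega⟩, ⟨0, by omega⟩), by simp⟩⟩
  rw [qnorm, fin_ciSup_lt_iff]
  refine forall_congr' fun p => ?_
  have h1 : 0 < (p.val.1 : ℕ) := lt_of_le_of_lt (Nat.zero_le _) p.property
  have hn : (0:ℝ) < ((p.val.1 : ℕ) : ℝ) + ((p.val.2 : ℕ) : ℝ) := by
    have h1' : (1:ℝ) ≤ ((p.val.1 : ℕ) : ℝ) := by exact_mod_cast h1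
    have h2' : (0:ℝ) ≤ ((p.val.2 : ℕ) : ℝ) := by positivity
    linarith
  rw [one_div, Real.rpow_inv_lt_iff_of_pos (mul_nonneg (hβ p).le (abs_nonneg _)) hr.le hn,
    show ((p.val.1 : ℕ) : ℝ) + ((p.val.2 : ℕ) : ℝ) = ((npE p : ℕ) : ℝ) by
      unfold npE; push_cast; ring,
    Real.rpow_natCast, mul_comm, ← lt_div_iff₀ (hβ p)]

theorem stmt16 (d : ℕ) (hd : 1 ≤ d) :
    ∃ c : ℝ, 1 ≤ c ∧
      ∀ δ δ' : ℝ, 0 < δ → δ < δ' → δ' < 1 → ∀ w Q : ℕ, 1 ≤ Q →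
        ∀ (x : Yd d → ℝ) (r : ℝ), 2 * (Q : ℝ) * (2 : ℝ) ^ (δ' * (w : ℝ)) ≤ r →
          let β : Yd d → ℝ := fun p =>
            if (p.val.2 : ℕ) = 0 then (2 : ℝ) ^ (⌊δ' * (w : ℝ)⌋₊) else (2 : ℝ) ^ (⌊δ * (w : ℝ)⌋₊)
          let B : Set (Yd d → ℤ) := {y | (∀ p, (Q : ℤ) ∣ y p) ∧
            qnorm β (Gmul x (Ginv (fun p => ((y p : ℤ) : ℝ)))) < r}
          c⁻¹ * ∏ p : Yd d, r ^ ((p.val.1 : ℕ) + (p.val.2 : ℕ)) / ((Q : ℝ) * β p) ≤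
              (B.ncard : ℝ) ∧
            (B.ncard : ℝ) ≤
              c * ∏ p : Yd d, r ^ ((p.val.1 : ℕ) + (p.val.2 : ℕ)) / ((Q : ℝ) * β p) := by
  classical
  refine ⟨3 ^ (Fintype.card (Yd d)), one_le_pow₀ (by norm_num), ?_⟩
  intro δ δ' hδ hδδ' hδ'1 w Q hQ x r hr β B
  have hQpos : 0 < Q := hQ
  have hQ0 : (0:ℝ) < (Q:ℝ) := by exact_mod_cast hQ
  have hβdef : β = fun p : Yd d =>
      if (p.val.2 : ℕ) = 0 then (2:ℝ) ^ (⌊δ' * (w : ℝ)⌋₊) else (2:ℝ) ^ (⌊δ * (w : ℝ)⌋₊) := rfl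
  have hpow1 : (1:ℝ) ≤ (2:ℝ) ^ (δ' * (w:ℝ)) := by
    have h := Real.rpow_le_rpow_of_exponent_le (by norm_num : (1:ℝ) ≤ 2)
      (mul_nonneg (by linarith : (0:ℝ) ≤ δ') (Nat.cast_nonneg w))
    simpa using h
  have hQ1 : (1:ℝ) ≤ (Q:ℝ) := by exact_mod_cast hQ
  have hr2 : (2:ℝ) ≤ r := le_trans (by nlinarith [hpow1, hQ1]) hr
  have hr0 : (0:ℝ) < r := by linarith
  have hr1 : (1:ℝ) ≤ r := by linarith
  have hβpos : ∀ p : Yd d, 0 < β p := by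
    intro p; rw [hβdef]; dsimp only; split <;> positivity
  have hβle : ∀ p : Yd d, β p ≤ (2:ℝ) ^ (δ' * (w:ℝ)) := by
    intro p
    have key : ∀ n : ℕ, (n:ℝ) ≤ δ' * (w:ℝ) → (2:ℝ) ^ n ≤ (2:ℝ) ^ (δ' * (w:ℝ)) := by
      intro n hn
      rw [← Real.rpow_natCast 2 n]
      exact Real.rpow_le_rpow_of_exponent_le (by norm_num) hn
    have hw0 : (0:ℝ) ≤ (w:ℝ) := by positivity
    rw [hβdef]; dsimp only; split
    · exact key _ (Nat.floor_le (mul_nonneg (by linarith) (Nat.cast_nonneg w)))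
    · refine key _ (le_trans (Nat.floor_le (mul_nonneg hδ.le (Nat.cast_nonneg w))) ?_)
      nlinarith
  have hnp1 : ∀ p : Yd d, 1 ≤ npE p := by
    intro p; have := p.property; unfold npE; omega
  set M : Yd d → ℝ := fun p => r ^ npE p / β p with hMdef
  have hM2Q : ∀ p, 2 * (Q:ℝ) ≤ M p := by
    intro p
    simp only [hMdef]
    rw [le_div_iff₀ (hβpos p)]
    calc 2 * (Q:ℝ) * β p ≤ 2 * Q * (2:ℝ) ^ (δ' * (w:ℝ)) := by nlinarith [hβle p]
      _ ≤ r := hr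
      _ ≤ r ^ npE p := le_self_pow₀ hr1 (by have := hnp1 p; omega)
  have ht2 : ∀ p : Yd d, (2:ℝ) ≤ M p / Q := fun p => (le_div_iff₀ hQ0).mpr (by
    have := hM2Q p; linarith)
  have ht0 : ∀ p : Yd d, (0:ℝ) ≤ M p / Q := fun p => le_trans (by norm_num) (ht2 p)
  have hTlb : ∀ (a : ℝ) (p : Yd d), M p / Q ≤ ((Tset Q a (M p)).card : ℝ) :=
    fun a p => (Tset_card_bounds hQpos (hM2Q p)).1
  have hTub : ∀ (a : ℝ) (p : Yd d), ((Tset Q a (M p)).card : ℝ) ≤ 3 * (M p / Q) :=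
    fun a p => (Tset_card_bounds hQpos (hM2Q p)).2
  -- membership characterization
  have hmem : ∀ y : Yd d → ℤ, y ∈ B ↔ ∀ p, y p ∈ Tset Q (ctrF x y p) (M p) := by
    intro y
    have hyB : y ∈ B ↔ ((∀ p, (Q:ℤ) ∣ y p) ∧
        qnorm β (Gmul x (Ginv (fun p => ((y p : ℤ) : ℝ)))) < r) := Iff.rfl
    rw [hyB, qnorm_lt_iff hd β _ hβpos hr0, ← forall_and]
    refine forall_congr' fun p => ?_
    rw [mem_Tset hQpos, Gmul_Ginv_eval]
  -- split the index set
  let Pp : Yd d → Prop := fun p => (p.val.2 : ℕ) = 0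
  let e := Equiv.piEquivPiSubtypeProd Pp (fun _ => ℤ)
  let ctr2 : {p : Yd d // ¬ Pp p} → ({p : Yd d // Pp p} → ℤ) → ℝ := fun q u =>
    x q.val + ((u ⟨idxA q.val, idxA_snd q.val⟩ : ℝ) - x (idxA q.val)) *
      (u ⟨idxB q.val q.property, idxB_snd q.val q.property⟩ : ℝ)
  let A : Finset ({p : Yd d // Pp p} → ℤ) :=
    Fintype.piFinset (fun q => Tset Q (x q.val) (M q.val))
  let J : ({p : Yd d // Pp p} → ℤ) → Finset ({p : Yd d // ¬ Pp p} → ℤ) := fun u =>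
    Fintype.piFinset (fun q => Tset Q (ctr2 q u) (M q.val))
  let F : Finset (({p : Yd d // Pp p} → ℤ) × ({p : Yd d // ¬ Pp p} → ℤ)) :=
    A.biUnion (fun u => {u} ×ˢ J u)
  have hesymm : ∀ (u : {p : Yd d // Pp p} → ℤ) (v : {p : Yd d // ¬ Pp p} → ℤ) (p : Yd d),
      e.symm (u, v) p = if h : Pp p then u ⟨p, h⟩ else v ⟨p, h⟩ := fun u v p => rfl
  have hctrsym : ∀ (u : {p : Yd d // Pp p} → ℤ) (v : {p : Yd d // ¬ Pp p} → ℤ)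
      (p : Yd d) (h : ¬ Pp p), ctrF x (e.symm (u, v)) p = ctr2 ⟨p, h⟩ u := by
    intro u v p h
    simp only [ctrF, dif_neg (show ¬ ((p.val.2 : ℕ) = 0) from h), ctr2, hesymm]
    rw [dif_pos (show Pp (idxA p) from idxA_snd p), dif_pos (show Pp (idxB p h) from idxB_snd p h)]
  have himg : ⇑e '' B = ↑F := by
    ext z
    obtain ⟨u, v⟩ := z
    rw [Set.mem_image_equiv, hmem]
    simp only [F, Finset.coe_biUnion, Set.mem_iUnion, Finset.mem_coe, Finset.mem_product,
      Finset.mem_singleton, Fintype.mem_piFinset, A, J]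
    constructor
    · intro h
      refine ⟨u, fun q => ?_, rfl, fun q => ?_⟩
      · have h' := h q.val
        rw [hesymm] at h'
        rw [dif_pos q.property] at h'
        have hc : ctrF x (e.symm (u, v)) q.val = x q.val := by
          simp only [ctrF, dif_pos (show ((q.val.val.2 : ℕ) = 0) from q.property)]
        rw [hc] at h'
        simpa using h'
      · have h' := h q.val
        rw [hctrsym u v q.val q.property, hesymm, dif_neg q.property] at h'
        simpa using h'
    · rintro ⟨u', hu', huu, hv⟩
      subst huu
      intro p
      rw [hesymm]
      by_cases h : Pp p
      · rw [dif_pos h]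
        have hc : ctrF x (e.symm (u, v)) p = x p := by
          simp only [ctrF, dif_pos (show ((p.val.2 : ℕ) = 0) from h)]
        rw [hc]
        exact hu' ⟨p, h⟩
      · rw [dif_neg h, hctrsym u v p h]
        exact hv ⟨p, h⟩
  have hncard : (B.ncard : ℝ) = (F.card : ℝ) := by
    rw [← Set.ncard_coe_finset, ← himg, Set.ncard_image_of_injective _ e.injective]
  have hdisj : ∀ u₁ ∈ A, ∀ u₂ ∈ A, u₁ ≠ u₂ → Disjoint ({u₁} ×ˢ J u₁) ({u₂} ×ˢ J u₂) := by
    intro u₁ _ u₂ _ hne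
    rw [Finset.disjoint_left]
    rintro ⟨a, b⟩ h1 h2
    simp only [Finset.mem_product, Finset.mem_singleton] at h1 h2
    exact hne (h1.1 ▸ h2.1 ▸ rfl)
  have hFcardN : F.card = ∑ u ∈ A, ∏ q : {p : Yd d // ¬ Pp p}, (Tset Q (ctr2 q u) (M q.val)).card := by
    rw [show F = A.biUnion (fun u => {u} ×ˢ J u) from rfl, Finset.card_biUnion hdisj]
    refine Finset.sum_congr rfl fun u _ => ?_
    rw [Finset.card_product, Finset.card_singleton, one_mul,
      show J u = Fintype.piFinset (fun q => Tset Q (ctr2 q u) (M q.val)) from rfl,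
      Fintype.card_piFinset]
  have hAcardN : A.card = ∏ q : {p : Yd d // Pp p}, (Tset Q (x q.val) (M q.val)).card := by
    rw [show A = Fintype.piFinset (fun q => Tset Q (x q.val) (M q.val)) from rfl,
      Fintype.card_piFinset]
  have hAlb : ∏ q : {p : Yd d // Pp p}, (M q.val / Q) ≤ (A.card : ℝ) := by
    rw [hAcardN]
    push_cast
    exact Finset.prod_le_prod (fun q _ => ht0 q.val) (fun q _ => hTlb _ _)
  have hAub : (A.card : ℝ) ≤ ∏ q : {p : Yd d // Pp p}, (3 * (M q.val / Q)) := by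
    rw [hAcardN]
    push_cast
    exact Finset.prod_le_prod (fun q _ => Nat.cast_nonneg _) (fun q _ => hTub _ _)
  have hsum_lb : (∏ q : {p : Yd d // Pp p}, (M q.val / Q)) *
      ∏ q : {p : Yd d // ¬ Pp p}, (M q.val / Q) ≤ (F.card : ℝ) := by
    have hprod_lb : ∀ u ∈ A, ∏ q : {p : Yd d // ¬ Pp p}, (M q.val / Q) ≤
        ∏ q : {p : Yd d // ¬ Pp p}, ((Tset Q (ctr2 q u) (M q.val)).card : ℝ) :=
      fun u _ => Finset.prod_le_prod (fun q _ => ht0 q.val) (fun q _ => hTlb _ _)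
    calc (∏ q : {p : Yd d // Pp p}, (M q.val / Q)) * ∏ q : {p : Yd d // ¬ Pp p}, (M q.val / Q)
        ≤ (A.card : ℝ) * ∏ q : {p : Yd d // ¬ Pp p}, (M q.val / Q) :=
          mul_le_mul_of_nonneg_right hAlb (Finset.prod_nonneg fun q _ => ht0 q.val)
      _ = A.card • ∏ q : {p : Yd d // ¬ Pp p}, (M q.val / Q) := (nsmul_eq_mul _ _).symm
      _ ≤ ∑ u ∈ A, ∏ q : {p : Yd d // ¬ Pp p}, ((Tset Q (ctr2 q u) (M q.val)).card : ℝ) :=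
          Finset.card_nsmul_le_sum A _ _ hprod_lb
      _ = (F.card : ℝ) := by rw [hFcardN]; push_cast; ring
  have hsum_ub : (F.card : ℝ) ≤ (∏ q : {p : Yd d // Pp p}, (3 * (M q.val / Q))) *
      ∏ q : {p : Yd d // ¬ Pp p}, (3 * (M q.val / Q)) := by
    have hprod_ub : ∀ u ∈ A, ∏ q : {p : Yd d // ¬ Pp p}, ((Tset Q (ctr2 q u) (M q.val)).card : ℝ)
        ≤ ∏ q : {p : Yd d // ¬ Pp p}, (3 * (M q.val / Q)) :=
      fun u _ => Finset.prod_le_prod (fun q _ => Nat.cast_nonneg _) (fun q _ => hTub _ _)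
    calc (F.card : ℝ)
        = ∑ u ∈ A, ∏ q : {p : Yd d // ¬ Pp p}, ((Tset Q (ctr2 q u) (M q.val)).card : ℝ) := by
          rw [hFcardN]; push_cast; ring
      _ ≤ A.card • ∏ q : {p : Yd d // ¬ Pp p}, (3 * (M q.val / Q)) :=
          Finset.sum_le_card_nsmul A _ _ hprod_ub
      _ = (A.card : ℝ) * ∏ q : {p : Yd d // ¬ Pp p}, (3 * (M q.val / Q)) := nsmul_eq_mul _ _
      _ ≤ _ := mul_le_mul_of_nonneg_right hAub (Finset.prod_nonneg fun q _ => by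
            have := ht0 q.val; linarith)
  have hsplit : ((∏ q : {p : Yd d // Pp p}, (M q.val / Q)) *
      ∏ q : {p : Yd d // ¬ Pp p}, (M q.val / Q)) = ∏ p : Yd d, (M p / Q) :=
    Fintype.prod_subtype_mul_prod_subtype Pp (fun p => M p / Q)
  have hsplit3 : ((∏ q : {p : Yd d // Pp p}, (3 * (M q.val / Q))) *
      ∏ q : {p : Yd d // ¬ Pp p}, (3 * (M q.val / Q))) = ∏ p : Yd d, (3 * (M p / Q)) :=
    Fintype.prod_subtype_mul_prod_subtype Pp (fun p => 3 * (M p / Q))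
  have htarg : (∏ p : Yd d, r ^ ((p.val.1 : ℕ) + (p.val.2 : ℕ)) / ((Q : ℝ) * β p)) =
      ∏ p : Yd d, (M p / Q) := by
    refine Finset.prod_congr rfl fun p _ => ?_
    simp only [hMdef]
    unfold npE
    rw [div_div]
    ring_nf
  have hprod_nonneg : (0:ℝ) ≤ ∏ p : Yd d, (M p / Q) :=
    Finset.prod_nonneg fun p _ => ht0 p
  constructor
  · calc ((3:ℝ) ^ (Fintype.card (Yd d)))⁻¹ *
        ∏ p : Yd d, r ^ ((p.val.1 : ℕ) + (p.val.2 : ℕ)) / ((Q : ℝ) * β p)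
        ≤ 1 * ∏ p : Yd d, r ^ ((p.val.1 : ℕ) + (p.val.2 : ℕ)) / ((Q : ℝ) * β p) := by
          rw [htarg]
          exact mul_le_mul_of_nonneg_right (by
            apply inv_le_one_of_one_le₀
            exact one_le_pow₀ (by norm_num)) hprod_nonneg
      _ = ∏ p : Yd d, (M p / Q) := by rw [one_mul, htarg]
      _ ≤ (F.card : ℝ) := by rw [← hsplit]; exact hsum_lb
      _ = (B.ncard : ℝ) := hncard.symm
  · calc (B.ncard : ℝ) = (F.card : ℝ) := hncard
      _ ≤ ∏ p : Yd d, (3 * (M p / Q)) := by rw [← hsplit3]; exact hsum_ub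
      _ = (3:ℝ) ^ (Fintype.card (Yd d)) * ∏ p : Yd d, (M p / Q) := by
          rw [Finset.prod_mul_distrib, Finset.prod_const, Finset.card_univ]
      _ = _ := by rw [htarg]
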